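/- Define f(C,φ) = (1 + C)/2 − C(1−C)·cos²φ and g(C,φ) = (1 + C)/2 − C(1−C)·sin²φ. Then for all C ∈ [0,1] and φ ∈ ℝ one has f(C,φ) ≥ 7/16, with equality if and only if C = 1/4 and cos²φ = 1 (i.e. φ ≡ 0 or π mod 2π); at these minimizers f(1/4, 0) = 7/16 < 1/2 while g(1/4, 0) = 5/8 > 1/2, exhibiting quadrature squeezing in X. -/
import Mathlib


noncomputable section

/-- The squared dispersion `(ΔX)²` of the coordinate quadrature in a super-coherent
state with concurrence `C` and phase `φ`. -/
noncomputable def f (C φ : ℝ) : ℝ := (1 + C) / 2 - C * (1 - C) * Real.cos φ ^ 2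

/-- The squared dispersion `(ΔP)²` of the momentum quadrature in a super-coherent
state with concurrence `C` and phase `φ`. -/
noncomputable def g (C φ : ℝ) : ℝ := (1 + C) / 2 - C * (1 - C) * Real.sin φ ^ 2

/-- Quadrature squeezing in `X`: for all `C ∈ [0,1]` and `φ ∈ ℝ` one has
`f(C,φ) ≥ 7/16`, with equality if and only if `C = 1/4` and `cos²φ = 1`; at these
minimizers `f(1/4,0) = 7/16 < 1/2` while `g(1/4,0) = 5/8 > 1/2`. -/
theorem quadrature_squeezing (C φ : ℝ) (hC0 : 0 ≤ C) (hC1 : C ≤ 1) :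
    7 / 16 ≤ f C φ ∧
    (f C φ = 7 / 16 ↔ C = 1 / 4 ∧ Real.cos φ ^ 2 = 1) ∧
    f (1 / 4) 0 = 7 / 16 ∧ g (1 / 4) 0 = 5 / 8 ∧
    (7 : ℝ) / 16 < 1 / 2 ∧ (1 : ℝ) / 2 < 5 / 8 := by
  have hc0 : (0:ℝ) ≤ Real.cos φ ^ 2 := sq_nonneg _
  have hc1 : Real.cos φ ^ 2 ≤ 1 := Real.cos_sq_le_one φ
  refine ⟨?_, ⟨?_, ?_⟩, ?_, ?_, by norm_num, by norm_num⟩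
  · unfold f; nlinarith [sq_nonneg (4*C - 1), mul_nonneg (mul_nonneg hC0 (sub_nonneg.2 hC1)) (sub_nonneg.2 hc1)]
  · intro h
    unfold f at h
    have hC : C = 1/4 := by
      nlinarith [sq_nonneg (4*C - 1), mul_nonneg (mul_nonneg hC0 (sub_nonneg.2 hC1)) (sub_nonneg.2 hc1)]
    subst hC
    constructor
    · rfl
    · nlinarith
  · rintro ⟨h1, h2⟩
    unfold f
    rw [h1, h2]; ring
  · unfold f; rw [Real.cos_zero]; norm_num
  · unfold g; rw [Real.sin_zero]; norm_num
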